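/- Let a = ‖u‖_{L²}, b = ‖v‖_{L²} with a, b > 0, and suppose ⟨u, v⟩ ≤ a·b (Cauchy–Schwarz). Then for 0 ≤ β < 1, ⟨u/a^β − v/b^β, u − v⟩ ≥ (a − b)(a^{1−β} − b^{1−β}) ≥ 0, i.e., the map u ↦ u/‖u‖^β is monotone on an inner product space. -/

import Mathlib

theorem stmt_1 {H : Type*} [NormedAddCommGroup H] [InnerProductSpace ℝ H]
    (u v : H) (a b β : ℝ) (ha : a = ‖u‖) (hb : b = ‖v‖)
    (hapos : 0 < a) (hbpos : 0 < b)
    (hCS : inner ℝ u v ≤ a * b) (hβ0 : 0 ≤ β) (hβ1 : β < 1) :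
    (a - b) * (a ^ (1 - β) - b ^ (1 - β)) ≤
      inner ℝ ((a ^ β)⁻¹ • u - (b ^ β)⁻¹ • v) (u - v) ∧
    (0 : ℝ) ≤ (a - b) * (a ^ (1 - β) - b ^ (1 - β)) := by
  have haβ : (0:ℝ) < a ^ β := Real.rpow_pos_of_pos hapos β
  have hbβ : (0:ℝ) < b ^ β := Real.rpow_pos_of_pos hbpos β
  have ha1 : a ^ (1 - β) = a / a ^ β := by
    rw [Real.rpow_sub hapos, Real.rpow_one]
  have hb1 : b ^ (1 - β) = b / b ^ β := by
    rw [Real.rpow_sub hbpos, Real.rpow_one]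
  have hexp : (inner ℝ ((a ^ β)⁻¹ • u - (b ^ β)⁻¹ • v) (u - v) : ℝ)
      = (a ^ β)⁻¹ * (a * a) + (b ^ β)⁻¹ * (b * b)
        - ((a ^ β)⁻¹ + (b ^ β)⁻¹) * inner ℝ u v := by
    rw [inner_sub_left, inner_sub_right, inner_sub_right,
      real_inner_smul_left, real_inner_smul_left, real_inner_smul_left,
      real_inner_smul_left, real_inner_self_eq_norm_mul_norm,
      real_inner_self_eq_norm_mul_norm, real_inner_comm v u, ← ha, ← hb]
    ring
  constructor
  · rw [hexp, ha1, hb1]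
    have hc : (0:ℝ) < (a ^ β)⁻¹ + (b ^ β)⁻¹ := by positivity
    have hid : (a - b) * (a / a ^ β - b / b ^ β)
        = (a ^ β)⁻¹ * (a * a) + (b ^ β)⁻¹ * (b * b)
          - ((a ^ β)⁻¹ + (b ^ β)⁻¹) * (a * b) := by
      field_simp
      ring
    have := mul_le_mul_of_nonneg_left hCS hc.le
    linarith
  · rcases le_total a b with hab | hab
    · have := Real.rpow_le_rpow hapos.le hab (by linarith : (0:ℝ) ≤ 1 - β)
      nlinarith
    · have := Real.rpow_le_rpow hbpos.le hab (by linarith : (0:ℝ) ≤ 1 - β)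
      exact mul_nonneg (by linarith) (by linarith)
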